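/- For all ordinals β < ε₀, natural numbers r and x, the Hardy hierarchy satisfies h^{ω^β · r}(x) = f_β^r(x), where f is the fast-growing hierarchy built from the same h. -/

import Mathlib

/-- Ordinal terms below ε₀: a term is a list of exponents,
`cons β γ` denoting ω^β + γ. -/
inductive OT : Type
  | nil : OT
  | cons : OT → OT → OT
deriving DecidableEq

namespace OT

/-- The term 1 = ω^0. -/
def one : OT := cons nil nil

/-- Syntactic concatenation (direct sum) of ordinal terms. -/
def add : OT → OT → OT
  | nil, b => b
  | cons e r, b => cons e (add r b)

/-- A term ω^{β₁}+...+ω^{β_m} is a successor iff m > 0 and β_m = 0. -/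
def isSucc : OT → Bool
  | nil => false
  | cons e nil => e == nil
  | cons _ (cons e r) => isSucc (cons e r)

/-- Remove the last summand ω^0 of a successor term. -/
def pred : OT → OT
  | nil => nil
  | cons _ nil => nil
  | cons e (cons e' r) => cons e (pred (cons e' r))

/-- Limit terms. -/
def isLim (a : OT) : Prop := a ≠ nil ∧ isSucc a = false

/-- ω^β · n as an ordinal term. -/
def rep : ℕ → OT → OT
  | 0, _ => nil
  | n + 1, β => cons β (rep n β)

/-- The standard assignment of fundamental sequences (with ω_x = x+1):
(γ+ω^{β+1})_x = γ+ω^β·(x+1) and (γ+ω^λ)_x = γ+ω^{λ_x}. -/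
def fseq : OT → ℕ → OT
  | nil, _ => nil
  | cons β nil, x =>
      if β = nil then nil
      else if isSucc β then rep (x + 1) (pred β)
      else cons (fseq β x) nil
  | cons β (cons e r), x => cons β (fseq (cons e r) x)

/-- Syntactic ordering of terms (on CNF terms this is the ordinal ordering). -/
def lt : OT → OT → Prop
  | _, nil => False
  | nil, cons _ _ => True
  | cons a r, cons b s => lt a b ∨ (a = b ∧ lt r s)

def le (a b : OT) : Prop := lt a b ∨ a = b

/-- Cantor normal form: exponents weakly decreasing, all in CNF. -/
def isCNF : OT → Prop
  | nil => True
  | cons b nil => isCNF b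
  | cons b (cons e r) => isCNF b ∧ le e b ∧ isCNF (cons e r)

/-- Number of occurrences of the exponent β in a term. -/
def count (β : OT) : OT → ℕ
  | nil => 0
  | cons b r => (if b = β then 1 else 0) + count β r

/-- k-lean: every coefficient (at every level) is ≤ k. -/
def leanOrd (k : ℕ) : OT → Prop
  | nil => True
  | cons b r => count b (cons b r) ≤ k ∧ leanOrd k b ∧ leanOrd k r

end OT

/-- Pointwise-at-x ordering: smallest transitive relation with
α ⊏_x α+1 and λ_x ⊏_x λ. -/
inductive Ptw (x : ℕ) : OT → OT → Prop
  | succ (a : OT) : Ptw x a (OT.add a OT.one)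
  | lim (l : OT) : OT.isLim l → Ptw x (OT.fseq l x) l
  | trans {a b c : OT} : Ptw x a b → Ptw x b c → Ptw x a c

section Aux

open Ordinal

noncomputable def ovOT : OT → Ordinal.{0}
  | .nil => 0
  | .cons e r => omega0 ^ ovOT e + ovOT r

lemma OT.add_nil' : ∀ a : OT, OT.add a OT.nil = a := by
  intro a
  induction a with
  | nil => rfl
  | cons e r ihe ihr => simp [OT.add, ihr]

lemma OT.add_ne_nil' (a : OT) {b : OT} (hb : b ≠ OT.nil) : OT.add a b ≠ OT.nil := by
  cases a with
  | nil => simpa [OT.add] using hb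
  | cons e r => simp [OT.add]

lemma OT.isSucc_add' : ∀ (a : OT) {b : OT}, b ≠ OT.nil →
    OT.isSucc (OT.add a b) = OT.isSucc b := by
  intro a
  induction a with
  | nil => intro b hb; rfl
  | cons e r ihe ihr =>
    intro b hb
    have h1 : OT.add r b ≠ OT.nil := OT.add_ne_nil' r hb
    cases hrb : OT.add r b with
    | nil => exact absurd hrb h1
    | cons e' r' =>
      show OT.isSucc (OT.cons e (OT.add r b)) = OT.isSucc b
      rw [hrb]
      show OT.isSucc (OT.cons e' r') = OT.isSucc b
      rw [← hrb]
      exact ihr hb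

lemma OT.pred_add' : ∀ (a : OT) {b : OT}, b ≠ OT.nil →
    OT.pred (OT.add a b) = OT.add a (OT.pred b) := by
  intro a
  induction a with
  | nil => intro b hb; rfl
  | cons e r ihe ihr =>
    intro b hb
    have h1 : OT.add r b ≠ OT.nil := OT.add_ne_nil' r hb
    cases hrb : OT.add r b with
    | nil => exact absurd hrb h1
    | cons e' r' =>
      show OT.pred (OT.cons e (OT.add r b)) = OT.cons e (OT.add r (OT.pred b))
      rw [hrb]
      show OT.cons e (OT.pred (OT.cons e' r')) = OT.cons e (OT.add r (OT.pred b))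
      rw [← hrb, ihr hb]

lemma OT.fseq_add' : ∀ (a : OT) {b : OT}, b ≠ OT.nil → ∀ x,
    OT.fseq (OT.add a b) x = OT.add a (OT.fseq b x) := by
  intro a
  induction a with
  | nil => intro b hb x; rfl
  | cons e r ihe ihr =>
    intro b hb x
    have h1 : OT.add r b ≠ OT.nil := OT.add_ne_nil' r hb
    cases hrb : OT.add r b with
    | nil => exact absurd hrb h1
    | cons e' r' =>
      show OT.fseq (OT.cons e (OT.add r b)) x = OT.cons e (OT.add r (OT.fseq b x))
      rw [hrb]
      show OT.cons e (OT.fseq (OT.cons e' r') x) = OT.cons e (OT.add r (OT.fseq b x))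
      rw [← hrb, ihr hb]

lemma ovOT_succ : ∀ a : OT, OT.isSucc a = true → ovOT a = ovOT (OT.pred a) + 1 := by
  intro a
  induction a with
  | nil => intro hs; simp [OT.isSucc] at hs
  | cons e r ihe ihr =>
    intro hs
    cases r with
    | nil =>
      have he : e = OT.nil := by
        simpa [OT.isSucc] using hs
      subst he
      simp [ovOT, OT.pred]
    | cons e' r' =>
      have hs' : OT.isSucc (OT.cons e' r') = true := hs
      show omega0 ^ ovOT e + ovOT (OT.cons e' r') = ovOT (OT.cons e (OT.pred (OT.cons e' r'))) + 1
      rw [ihr hs']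
      show _ = omega0 ^ ovOT e + ovOT (OT.pred (OT.cons e' r')) + 1
      rw [add_assoc]

lemma ovOT_rep_lt (γ : OT) : ∀ n : ℕ, ovOT (OT.rep n γ) < omega0 ^ (ovOT γ + 1) := by
  intro n
  induction n with
  | zero =>
    show (0 : Ordinal) < _
    exact opow_pos _ omega0_pos
  | succ n ih =>
    show omega0 ^ ovOT γ + ovOT (OT.rep n γ) < omega0 ^ (ovOT γ + 1)
    have h1 : omega0 ^ ovOT γ < omega0 ^ (ovOT γ + 1) :=
      (opow_lt_opow_iff_right one_lt_omega0).2 (lt_add_one _)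
    exact principal_add_omega0_opow _ h1 ih

lemma ovOT_fseq_lt : ∀ a : OT, OT.isLim a → ∀ x, ovOT (OT.fseq a x) < ovOT a := by
  intro a
  induction a with
  | nil => intro hl; exact absurd rfl hl.1
  | cons e r ihe ihr =>
    intro hl x
    cases r with
    | nil =>
      have he : e ≠ OT.nil := by
        intro h; subst h
        exact absurd hl.2 (by decide)
      by_cases hs : OT.isSucc e = true
      · have : OT.fseq (OT.cons e OT.nil) x = OT.rep (x + 1) (OT.pred e) := by
          simp [OT.fseq, he, hs]
        rw [this]
        have h1 := ovOT_rep_lt (OT.pred e) (x + 1)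
        have h2 : ovOT e = ovOT (OT.pred e) + 1 := ovOT_succ e hs
        show _ < omega0 ^ ovOT e + ovOT OT.nil
        rw [h2]
        calc ovOT (OT.rep (x + 1) (OT.pred e)) < omega0 ^ (ovOT (OT.pred e) + 1) := h1
          _ ≤ omega0 ^ (ovOT (OT.pred e) + 1) + ovOT OT.nil := le_self_add
      · have hel : OT.isLim e := ⟨he, by simpa using hs⟩
        have : OT.fseq (OT.cons e OT.nil) x = OT.cons (OT.fseq e x) OT.nil := by
          simp [OT.fseq, he, hs]
        rw [this]
        show omega0 ^ ovOT (OT.fseq e x) + ovOT OT.nil < omega0 ^ ovOT e + ovOT OT.nil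
        have h3 : omega0 ^ ovOT (OT.fseq e x) < omega0 ^ ovOT e :=
          (opow_lt_opow_iff_right one_lt_omega0).2 (ihe hel x)
        have hz : ovOT OT.nil = 0 := rfl
        rw [hz, add_zero, add_zero]
        exact h3
    | cons e' r' =>
      have hl' : OT.isLim (OT.cons e' r') := ⟨by simp, hl.2⟩
      show omega0 ^ ovOT e + ovOT (OT.fseq (OT.cons e' r') x) <
        omega0 ^ ovOT e + ovOT (OT.cons e' r')
      exact (add_lt_add_iff_left _).2 (ihr hl' x)

end Aux

/-- h^{ω^β · r}(x) = f_β^r(x), where `H` is the Hardy hierarchy and `f` the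
fast-growing hierarchy built from the same control h (with ω_x = x+1). -/
theorem stmt14 (h : ℕ → ℕ) (H : OT → ℕ → ℕ) (f : OT → ℕ → ℕ)
    (hH0 : ∀ x, H OT.nil x = x)
    (hHs : ∀ a x, OT.isSucc a = true → H a x = H (OT.pred a) (h x))
    (hHl : ∀ a x, OT.isLim a → H a x = H (OT.fseq a x) x)
    (hf0 : ∀ x, f OT.nil x = h x)
    (hfs : ∀ a x, OT.isSucc a = true → f a x = (f (OT.pred a))^[x + 1] x)
    (hfl : ∀ a x, OT.isLim a → f a x = f (OT.fseq a x) x) :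
    ∀ (b : OT) (r x : ℕ), H (OT.rep r b) x = (f b)^[r] x := by
  classical
  -- composition lemma
  have comp : ∀ (b a : OT) (x : ℕ), H (OT.add a b) x = H a (H b x) := by
    have key : ∀ (v : Ordinal) (b : OT), ovOT b = v →
        ∀ (a : OT) (x : ℕ), H (OT.add a b) x = H a (H b x) := by
      intro v
      induction v using Ordinal.induction with
      | h v IH =>
        intro b hb a x
        cases b with
        | nil => rw [OT.add_nil', hH0]
        | cons e r =>
          have hne : OT.cons e r ≠ OT.nil := by simp
          by_cases hs : OT.isSucc (OT.cons e r) = true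
          · have hs2 : OT.isSucc (OT.add a (OT.cons e r)) = true := by
              rw [OT.isSucc_add' a hne]; exact hs
            have hlt : ovOT (OT.pred (OT.cons e r)) < v := by
              rw [← hb, ovOT_succ _ hs]; exact lt_add_one _
            rw [hHs _ _ hs2, OT.pred_add' a hne,
              IH (ovOT (OT.pred (OT.cons e r))) hlt _ rfl, ← hHs _ _ hs]
          · have hlim : OT.isLim (OT.cons e r) := ⟨hne, by simpa using hs⟩
            have hlim2 : OT.isLim (OT.add a (OT.cons e r)) :=
              ⟨OT.add_ne_nil' a hne, by rw [OT.isSucc_add' a hne]; exact hlim.2⟩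
            have hlt : ovOT (OT.fseq (OT.cons e r) x) < v := by
              rw [← hb]; exact ovOT_fseq_lt _ hlim x
            rw [hHl _ _ hlim2, OT.fseq_add' a hne,
              IH (ovOT (OT.fseq (OT.cons e r) x)) hlt _ rfl, ← hHl _ _ hlim]
    intro b a x
    exact key (ovOT b) b rfl a x
  -- main lemma: H (ω^β) = f β
  have main : ∀ (β : OT) (x : ℕ), H (OT.cons β OT.nil) x = f β x := by
    have key : ∀ (v : Ordinal) (β : OT), ovOT β = v →
        ∀ x, H (OT.cons β OT.nil) x = f β x := by
      intro v
      induction v using Ordinal.induction with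
      | h v IH =>
        intro β hβ x
        have Hrep : ∀ (γ : OT), ovOT γ < v → ∀ (r x : ℕ),
            H (OT.rep r γ) x = (f γ)^[r] x := by
          intro γ hγ r
          induction r with
          | zero => intro x; simpa [OT.rep] using hH0 x
          | succ r ih =>
            intro x
            have hr : OT.rep (r + 1) γ = OT.add (OT.cons γ OT.nil) (OT.rep r γ) := rfl
            rw [hr, comp, ih, IH (ovOT γ) hγ γ rfl, Function.iterate_succ_apply']
        by_cases hβnil : β = OT.nil
        · subst hβnil
          have hs : OT.isSucc (OT.cons OT.nil OT.nil) = true := rfl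
          rw [hHs _ _ hs]
          show H OT.nil (h x) = f OT.nil x
          rw [hH0, hf0]
        · have hlim : OT.isLim (OT.cons β OT.nil) := by
            refine ⟨by simp, ?_⟩
            show (β == OT.nil) = false
            simpa using hβnil
          by_cases hβs : OT.isSucc β = true
          · have hfq : OT.fseq (OT.cons β OT.nil) x = OT.rep (x + 1) (OT.pred β) := by
              simp [OT.fseq, hβnil, hβs]
            have hlt : ovOT (OT.pred β) < v := by
              rw [← hβ, ovOT_succ _ hβs]; exact lt_add_one _
            rw [hHl _ _ hlim, hfq, Hrep _ hlt, hfs _ _ hβs]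
          · have hβlim : OT.isLim β := ⟨hβnil, by simpa using hβs⟩
            have hfq : OT.fseq (OT.cons β OT.nil) x = OT.cons (OT.fseq β x) OT.nil := by
              simp [OT.fseq, hβnil, hβs]
            have hlt : ovOT (OT.fseq β x) < v := by
              rw [← hβ]; exact ovOT_fseq_lt _ hβlim x
            rw [hHl _ _ hlim, hfq, IH (ovOT (OT.fseq β x)) hlt _ rfl, ← hfl _ _ hβlim]
    intro β x
    exact key (ovOT β) β rfl x
  intro b r
  induction r with
  | zero => intro x; simpa [OT.rep] using hH0 x
  | succ r ih =>
    intro x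
    have hr : OT.rep (r + 1) b = OT.add (OT.cons b OT.nil) (OT.rep r b) := rfl
    rw [hr, comp, ih, main, Function.iterate_succ_apply']
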